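/- Let X : [0,L] → ℝ^d be a path each of whose coordinates is a polynomial function of t, and let L ≥ 1. Let X̃ : ℝ → ℝ^d be the polynomial map X̃(y) = X(y) − X(0), which satisfies X̃(0) = 0. Then for every w ∈ T(ℝ^d), ⟨σ(X), w⟩ = ⟨exp_∘(L·𝟙), M_{X̃}(w)⟩, where 𝟙 denotes the single letter of the one-letter alphabet; equivalently, σ(X) = M_{X̃}^*(exp_∘(L·𝟙)). -/

import Mathlib

noncomputable section

open MeasureTheory

/-- Words in the alphabet `{1,…,d}`. -/
abbrev Word (d : ℕ) := List (Fin d)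

/-- `T(ℝ^d)`: the real vector space with basis the words in `{1,…,d}`. -/
abbrev Tens (d : ℕ) := Word d →₀ ℝ

namespace SigPaper

variable {d m s : ℕ}

/-- The basis word `w` as an element of `T(ℝ^d)`. -/
def wordT (w : Word d) : Tens d := Finsupp.single w 1

/-- The shuffle product of two words. -/
def shuffleWord : Word d → Word d → Tens d
  | [], v => Finsupp.single v 1
  | u, [] => Finsupp.single u 1
  | a :: u, b :: v =>
      Finsupp.mapDomain (fun w => a :: w) (shuffleWord u (b :: v)) +
      Finsupp.mapDomain (fun w => b :: w) (shuffleWord (a :: u) v)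
  termination_by u v => u.length + v.length
  decreasing_by all_goals first | (simp +arith +decide; done) | (simp <;> omega) | omega

/-- The shuffle product `⧢` on `T(ℝ^d)`, the bilinear extension of the shuffle of words. -/
def shuffle (x y : Tens d) : Tens d :=
  x.sum fun u a => y.sum fun v b => (a * b) • shuffleWord u v

/-- The operator appending the letter `i` at the end of every word (`T_i^+`). -/
def appendLetter (i : Fin d) (x : Tens d) : Tens d :=
  Finsupp.mapDomain (fun w => w ++ [i]) x

/-- The right half-shuffle of two words: `w ≻ (v∘i) = (w ⧢ v)∘i` (zero if the right word
is empty). -/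
def halfShuffleWord (u v : Word d) : Tens d :=
  match v.getLast? with
  | none => 0
  | some i => appendLetter i (shuffleWord u v.dropLast)

/-- The right half-shuffle `≻`, extended bilinearly. -/
def halfShuffle (x y : Tens d) : Tens d :=
  x.sum fun u a => y.sum fun v b => (a * b) • halfShuffleWord u v

/-- The letter-appending operator `T_i^+`. -/
def Tplus (i : Fin d) : Tens d → Tens d := appendLetter i

/-- `T_i^-` on a word: removes the last letter if it equals `i`, otherwise `0`. -/
def TminusWord (i : Fin d) (w : Word d) : Tens d :=
  match w.getLast? with
  | none => 0
  | some j => if j = i then Finsupp.single w.dropLast 1 else 0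

/-- The letter-removing operator `T_i^-`. -/
def Tminus (i : Fin d) (x : Tens d) : Tens d := x.sum fun w a => a • TminusWord i w

/-- The single-letter word `i` in `T(ℝ^d)`. -/
def letterT (i : Fin d) : Tens d := Finsupp.single [i] 1

/-- Shuffle powers `x^{⧢ n}`. -/
def shufflePow (x : Tens d) : ℕ → Tens d
  | 0 => Finsupp.single [] 1
  | n + 1 => shuffle (shufflePow x n) x

/-- Shuffle product of a list of elements. -/
def shuffleList : List (Tens d) → Tens d
  | [] => Finsupp.single [] 1
  | x :: xs => shuffle x (shuffleList xs)

/-- Image of the monomial `x^t` under `φ_d`: the shuffle product of its letters. -/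
def phiMon (t : Fin d →₀ ℕ) : Tens d :=
  shuffleList ((List.finRange d).map fun i => shufflePow (letterT i) (t i))

/-- The embedding `φ_d : ℝ[x₁,…,x_d] → (T(ℝ^d), ⧢)` sending the monomial
`x_{i₁}⋯x_{i_l}` to `i₁ ⧢ ⋯ ⧢ i_l`. -/
def phi (f : MvPolynomial (Fin d) ℝ) : Tens d :=
  f.support.sum fun t => f.coeff t • phiMon t

/-- A polynomial map `p : ℝ^d → ℝ^m`, given by `m` polynomials in `d` variables. -/
abbrev PolyMap (d m : ℕ) := Fin m → MvPolynomial (Fin d) ℝ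

/-- `k_p^{ij} = φ_d(∂p_i/∂x_j) ∈ T(ℝ^d)`. -/
def kP (p : PolyMap d m) (i : Fin m) (j : Fin d) : Tens d :=
  phi (MvPolynomial.pderiv j (p i))

/-- Auxiliary: `M_p` on reversed words, so that `M_p(e) = e` and
`M_p(w∘i) = Σ_j (M_p(w) ⧢ k_p^{ij})∘j`. -/
def MpRev (p : PolyMap d m) : List (Fin m) → Tens d
  | [] => Finsupp.single [] 1
  | i :: w => ∑ j : Fin d, appendLetter j (shuffle (MpRev p w) (kP p i j))

/-- `M_p` on a word. -/
def MpWord (p : PolyMap d m) (w : Word m) : Tens d := MpRev p w.reverse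

/-- The linear map `M_p : T(ℝ^m) → T(ℝ^d)`. -/
def Mp (p : PolyMap d m) (x : Tens m) : Tens d := x.sum fun w a => a • MpWord p w

/-- `X : [0,L] → ℝ^d` is piecewise continuously differentiable: there is a partition
`0 = t₀ ≤ t₁ ≤ ⋯ ≤ t_n = L` such that `X` is `C¹` on each subinterval. -/
def PiecewiseC1 (X : ℝ → Fin d → ℝ) (L : ℝ) : Prop :=
  ∃ (n : ℕ) (t : Fin (n + 1) → ℝ), Monotone t ∧ t 0 = 0 ∧ t (Fin.last n) = L ∧
    ∀ k : Fin n, ContDiffOn ℝ 1 X (Set.Icc (t k.castSucc) (t k.succ))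

/-- Iterated-integral signature coefficients, on reversed words:
`⟨σ(X|_{[0,t]}), w∘i⟩ = ∫_0^t ⟨σ(X|_{[0,r]}), w⟩ Ẋ^i_r dr`. -/
def sigRev (X : ℝ → Fin d → ℝ) : List (Fin d) → ℝ → ℝ
  | [], _ => 1
  | i :: w, t => ∫ r in (0:ℝ)..t, sigRev X w r * deriv (fun u => X u i) r

/-- `⟨σ(X|_{[0,L]}), w⟩`, the signature coefficient of the word `w`. -/
def sigWord (X : ℝ → Fin d → ℝ) (L : ℝ) (w : Word d) : ℝ := sigRev X w.reverse L

/-- The pairing `⟨σ(X|_{[0,L]}), x⟩` for `x ∈ T(ℝ^d)`. -/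
def sigT (X : ℝ → Fin d → ℝ) (L : ℝ) (x : Tens d) : ℝ :=
  x.sum fun w a => a * sigWord X L w

/-- The transformed path `p(X) : t ↦ p(X(t))`. -/
def pPath (p : PolyMap d m) (X : ℝ → Fin d → ℝ) : ℝ → Fin m → ℝ :=
  fun t i => MvPolynomial.eval (X t) (p i)

/-- The translated polynomial map `p̃(y) = p(y + x₀) − p(x₀)`, satisfying `p̃(0) = 0`. -/
def ptilde (p : PolyMap d m) (x0 : Fin d → ℝ) : PolyMap d m := fun i =>
  MvPolynomial.aeval (fun j => MvPolynomial.X j + MvPolynomial.C (x0 j)) (p i) -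
    MvPolynomial.C (MvPolynomial.eval x0 (p i))

/-- The pairing `⟨exp_∘(L·𝟙), x⟩` for `x ∈ T(ℝ¹)`: the coefficient of the word of
length `n` in `exp_∘(L·𝟙)` is `Lⁿ/n!`. -/
def expPair (L : ℝ) (x : Tens 1) : ℝ :=
  x.sum fun w a => a * (L ^ w.length / (w.length.factorial : ℝ))

/-- The pairing `⟨σ(X) ∘ σ(Y), x⟩` of the concatenation product of two signatures with
`x ∈ T(ℝ^d)`: on a word `w` it is `Σ_{u∘v = w} ⟨σ(X), u⟩·⟨σ(Y), v⟩`. -/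
def concatPair (X Y : ℝ → Fin d → ℝ) (L : ℝ) (x : Tens d) : ℝ :=
  x.sum fun w a =>
    a * ∑ k ∈ Finset.range (w.length + 1), sigWord X L (w.take k) * sigWord Y L (w.drop k)


lemma word1_eq (w : Word 1) : w = List.replicate w.length 0 := by
  induction w with
  | nil => rfl
  | cons a w ih =>
    simp only [List.length_cons, List.replicate_succ]
    rw [Subsingleton.elim a 0, ← ih]

lemma shuffleWord_one : ∀ (n : ℕ) (u v : Word 1), u.length + v.length = n →
    shuffleWord u v = Finsupp.single (List.replicate (u.length + v.length) 0)
      (((u.length + v.length).choose u.length : ℕ) : ℝ) := by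
  intro n
  induction n using Nat.strong_induction_on with
  | _ n ih =>
    intro u v hn
    match u, v with
    | [], v =>
      rw [shuffleWord]
      simp [← word1_eq v]
    | a :: u, [] =>
      rw [shuffleWord]
      case x_2 => simp
      rw [show (a::u).length + ([]:Word 1).length = (a::u).length by simp,
          Nat.choose_self, ← word1_eq (a :: u)]
      simp
    | a :: u, b :: v =>
      rw [shuffleWord]
      rw [ih (u.length + (b::v).length) (by simp at hn ⊢; omega) u (b::v) rfl,
          ih ((a::u).length + v.length) (by simp at hn ⊢; omega) (a::u) v rfl]
      rw [Finsupp.mapDomain_single, Finsupp.mapDomain_single]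
      rw [Subsingleton.elim a 0, Subsingleton.elim b 0]
      simp only [List.length_cons, ← List.replicate_succ]
      have h1 : u.length + (v.length + 1) + 1 = (u.length + 1) + (v.length + 1) := by omega
      have h2 : u.length + 1 + v.length + 1 = (u.length + 1) + (v.length + 1) := by omega
      rw [h1, h2, ← Finsupp.single_add]
      congr 1
      have h3 : (u.length + (v.length+1)).choose u.length
          + ((u.length+1) + v.length).choose (u.length+1)
          = ((u.length+1) + (v.length+1)).choose (u.length+1) := by
        rw [show u.length + (v.length+1) = u.length+v.length+1 by omega,
            show (u.length+1)+v.length = u.length+v.length+1 by omega,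
            show (u.length+1)+(v.length+1) = u.length+v.length+1+1 by omega]
        exact (Nat.choose_succ_succ _ _).symm
      exact_mod_cast h3

/-- The coefficient `L^n/n!`. -/
def expC (L : ℝ) (n : ℕ) : ℝ := L ^ n / n.factorial

/-- `expPair L` as a linear map. -/
def expPairL (L : ℝ) : Tens 1 →ₗ[ℝ] ℝ :=
  Finsupp.linearCombination ℝ (fun w : Word 1 => expC L w.length)

lemma expPair_eq (L : ℝ) (x : Tens 1) : expPair L x = expPairL L x := by
  simp [expPair, expPairL, Finsupp.linearCombination_apply, Finsupp.sum, expC, smul_eq_mul]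

lemma expPair_single (L : ℝ) (w : Word 1) (c : ℝ) :
    expPair L (Finsupp.single w c) = c * expC L w.length := by
  rw [expPair, expC]
  exact Finsupp.sum_single_index (by simp)

lemma expPair_finsupp_sum {α M : Type*} [Zero M] (L : ℝ) (x : α →₀ M) (f : α → M → Tens 1) :
    expPair L (x.sum f) = x.sum fun a c => expPair L (f a c) := by
  simp only [expPair_eq]
  exact map_finsuppSum (expPairL L) x f

lemma expPair_smul (L c : ℝ) (x : Tens 1) : expPair L (c • x) = c * expPair L x := by
  simp only [expPair_eq]
  rw [LinearMap.map_smul, smul_eq_mul]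

lemma expC_mul (r : ℝ) (a b : ℕ) :
    expC r a * expC r b = ((a + b).choose a : ℝ) * expC r (a + b) := by
  have h : ((a + b).choose a : ℝ) * a.factorial * b.factorial = (a + b).factorial := by
    have := Nat.choose_mul_factorial_mul_factorial (Nat.le_add_right a b)
    rw [Nat.add_sub_cancel_left] at this
    exact_mod_cast this
  have ha : (a.factorial : ℝ) ≠ 0 := Nat.cast_ne_zero.mpr a.factorial_ne_zero
  have hb : (b.factorial : ℝ) ≠ 0 := Nat.cast_ne_zero.mpr b.factorial_ne_zero
  have hab : ((a + b).factorial : ℝ) ≠ 0 := Nat.cast_ne_zero.mpr (a + b).factorial_ne_zero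
  rw [expC, expC, expC]
  field_simp
  rw [← h, ← pow_add]
  ring

lemma expPair_shuffle (r : ℝ) (x y : Tens 1) :
    expPair r (shuffle x y) = expPair r x * expPair r y := by
  rw [shuffle, expPair_finsupp_sum]
  have hx : expPair r x = x.sum fun w a => a * expC r w.length := rfl
  have hy : expPair r y = y.sum fun w a => a * expC r w.length := rfl
  rw [hx, hy, Finsupp.sum_mul]
  refine Finsupp.sum_congr fun u _ => ?_
  rw [expPair_finsupp_sum, Finsupp.mul_sum]
  refine Finsupp.sum_congr fun v _ => ?_
  rw [expPair_smul, shuffleWord_one (u.length + v.length) u v rfl, expPair_single,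
      List.length_replicate, ← expC_mul]
  ring

lemma expPair_shufflePow (r : ℝ) (x : Tens 1) (n : ℕ) :
    expPair r (shufflePow x n) = expPair r x ^ n := by
  induction n with
  | zero => simp [shufflePow, expPair_single, expC]
  | succ n ih => rw [shufflePow, expPair_shuffle, ih, pow_succ]

lemma expPair_letter (r : ℝ) : expPair r (letterT 0) = r := by
  simp [letterT, expPair_single, expC]

lemma expPair_phiMon (r : ℝ) (t : Fin 1 →₀ ℕ) : expPair r (phiMon t) = r ^ t 0 := by
  rw [phiMon, show List.finRange 1 = [0] from rfl]
  simp only [List.map_cons, List.map_nil, shuffleList]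
  rw [expPair_shuffle, expPair_shufflePow, expPair_letter, expPair_single]
  simp [expC]

lemma expPair_phi (r : ℝ) (f : MvPolynomial (Fin 1) ℝ) :
    expPair r (phi f) = MvPolynomial.eval (fun _ => r) f := by
  rw [phi, expPair_eq, map_sum, MvPolynomial.eval_eq' (fun _ => r) f]
  refine Finset.sum_congr rfl fun t _ => ?_
  rw [← expPair_eq, expPair_smul, expPair_phiMon, Fin.prod_univ_one]

lemma hasDerivAt_eval (f : MvPolynomial (Fin 1) ℝ) (r : ℝ) :
    HasDerivAt (fun u => MvPolynomial.eval (fun _ => u) f)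
      (MvPolynomial.eval (fun _ => r) (MvPolynomial.pderiv 0 f)) r := by
  induction f using MvPolynomial.induction_on with
  | C a => simpa using hasDerivAt_const r a
  | add p q hp hq => simp only [map_add]; exact hp.add hq
  | mul_X p j hp =>
    rw [Subsingleton.elim j 0]
    have h := hp.mul (hasDerivAt_id r)
    simp only [MvPolynomial.pderiv_mul, MvPolynomial.pderiv_X_self, mul_one, map_add,
      map_mul, MvPolynomial.eval_X, id_eq] at h ⊢
    exact h

lemma expPair_appendLetter (t : ℝ) (i : Fin 1) (y : Tens 1) :
    expPair t (appendLetter i y) = ∫ r in (0:ℝ)..t, expPair r y := by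
  rw [appendLetter, expPair]
  have hmap := Finsupp.sum_mapDomain_index (f := fun w : Word 1 => w ++ [i]) (s := y)
      (h := fun (w : Word 1) (a : ℝ) => a * (t ^ w.length / w.length.factorial))
      (by intro b; simp) (by intro b m1 m2; ring)
  rw [hmap]
  have hrhs : ∀ r : ℝ, expPair r y = ∑ w ∈ y.support, y w * expC r w.length := fun r => rfl
  have hint : ∀ w ∈ y.support, IntervalIntegrable
      (fun r : ℝ => y w * expC r w.length) volume 0 t := by
    intro w _
    exact (by unfold expC; fun_prop : Continuous fun r : ℝ => y w * expC r w.length)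
      |>.intervalIntegrable 0 t
  rw [intervalIntegral.integral_congr (g := fun r => ∑ w ∈ y.support, y w * expC r w.length)
    (fun r _ => hrhs r)]
  have hsum : (∫ r in (0:ℝ)..t, ∑ w ∈ y.support, y w * expC r w.length)
      = ∑ w ∈ y.support, ∫ r in (0:ℝ)..t, y w * expC r w.length :=
    intervalIntegral.integral_finset_sum hint
  rw [hsum, Finsupp.sum]
  refine Finset.sum_congr rfl fun w _ => ?_
  have : (fun r : ℝ => y w * expC r w.length) = fun r => (y w / w.length.factorial) * r ^ w.length := by
    funext r; rw [expC]; ring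
  rw [this, intervalIntegral.integral_const_mul, integral_pow]
  have hfac : ((w.length + 1).factorial : ℝ) = (w.length + 1) * w.length.factorial := by
    rw [Nat.factorial_succ]; push_cast; ring
  have h1 : (w.length.factorial : ℝ) ≠ 0 := Nat.cast_ne_zero.mpr w.length.factorial_ne_zero
  have h2 : ((w.length : ℝ) + 1) ≠ 0 := by positivity
  simp only [List.length_append, List.length_cons, List.length_nil, zero_add,
    zero_pow (Nat.succ_ne_zero w.length), sub_zero]
  rw [hfac]
  field_simp

lemma sig_eq_exp (q : PolyMap 1 d) (w : List (Fin d)) (t : ℝ) :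
    sigRev (fun t i => MvPolynomial.eval (fun _ => t) (q i)) w t =
      expPair t (MpRev (fun i => q i -
        MvPolynomial.C (MvPolynomial.eval (fun _ => (0 : ℝ)) (q i))) w) := by
  induction w generalizing t with
  | nil => simp [sigRev, MpRev, expPair_single, expC]
  | cons i w ih =>
    rw [sigRev, MpRev, Fin.sum_univ_one, expPair_appendLetter]
    refine intervalIntegral.integral_congr fun r _ => ?_
    rw [expPair_shuffle, ← ih r, kP, expPair_phi]
    have hd : deriv (fun u => (fun t (i : Fin d) => MvPolynomial.eval
        (fun _ : Fin 1 => t) (q i)) u i) r =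
        MvPolynomial.eval (fun _ => r) (MvPolynomial.pderiv 0 (q i)) :=
      (hasDerivAt_eval (q i) r).deriv
    rw [hd]
    simp [map_sub, MvPolynomial.pderiv_C]


/-- For a path `X : [0,L] → ℝ^d` (with `L ≥ 1`) whose coordinates are
polynomial functions of `t`, given by the polynomial map `q : ℝ → ℝ^d`, and with
`X̃(y) = X(y) − X(0)`, one has `⟨σ(X), w⟩ = ⟨exp_∘(L·𝟙), M_{X̃}(w)⟩` for all
`w ∈ T(ℝ^d)`, i.e. `σ(X) = M_{X̃}^*(exp_∘(L·𝟙))`. -/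
theorem signature_polynomial_path (d : ℕ) (L : ℝ) (hL : 1 ≤ L) (q : PolyMap 1 d) :
    ∀ x : Tens d,
      sigT (fun t i => MvPolynomial.eval (fun _ => t) (q i)) L x =
        expPair L
          (Mp (fun i => q i -
            MvPolynomial.C (MvPolynomial.eval (fun _ => (0 : ℝ)) (q i))) x) := by
  intro x
  rw [sigT, Mp, expPair_finsupp_sum]
  refine Finsupp.sum_congr fun w _ => ?_
  rw [expPair_smul, sigWord, MpWord, sig_eq_exp]

end SigPaper
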